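/- arXiv:1210.0405 — 2 statements merged into one kernel-verified Lean document; each statement's English description precedes it below -/
import Mathlib

section
/- Define τ_P(n) to be the minimum number k such that n can be written as a sum of k (not necessarily distinct) numbers each of the form 2^d − 1 with d ≥ 1. Then the greedy algorithm is optimal: τ_P satisfies τ_P(2^k − 1) = 1 for all k ≥ 1, and for n not of the form 2^k − 1, τ_P(n) = 1 + τ_P(n − (2^⌊log₂(n+1)⌋ − 1)). -/
def nu (d : ℕ) : ℕ := 2 ^ d - 1

def IsABP (n : ℕ) (P : Multiset ℕ) : Prop :=
  (∀ i ∈ P, 1 ≤ i) ∧ (P.map nu).sum = n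

noncomputable def tauP (n : ℕ) : ℕ :=
  sInf {k | ∃ P : Multiset ℕ, IsABP n P ∧ P.card = k}

def IsSABP (n : ℕ) (P N : Multiset ℕ) : Prop :=
  (∀ i ∈ P, 1 ≤ i) ∧ (∀ j ∈ N, 1 ≤ j) ∧
    (n : ℤ) = ((P.map nu).sum : ℤ) - ((N.map nu).sum : ℤ)

noncomputable def tau (n : ℕ) : ℕ :=
  sInf {k | ∃ P N : Multiset ℕ, IsSABP n P N ∧ P.card + N.card = k}

noncomputable def tauC (n : ℕ) : ℕ :=
  sInf {k | ∃ (r : ℕ) (N : Multiset ℕ), IsSABP n {r} N ∧ 1 + N.card = k}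

def greedy : ℕ → Multiset ℕ
  | 0 => 0
  | (n+1) => Nat.log 2 (n+2) ::ₘ greedy (n + 1 - nu (Nat.log 2 (n+2)))
  decreasing_by
    have h1 : 0 < Nat.log 2 (n+2) := Nat.log_pos one_lt_two (by omega)
    have h2 : 2 ^ 1 ≤ 2 ^ Nat.log 2 (n+2) := Nat.pow_le_pow_right (by norm_num) h1
    simp only [nu] at *
    omega

open Classical in
noncomputable def dualf (n : ℕ) : ℕ :=
  if ∃ k : ℕ, 1 ≤ k ∧ n = 2 ^ k - 1 then n else 3 * 2 ^ Nat.log 2 n - n - 2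

def parentT (v : ℕ × ℕ) : ℕ × ℕ := (v.1 + 1, v.2 / 2)

def levelT (v : ℕ × ℕ) : ℕ := v.1 + 1

def treeGraph : SimpleGraph (ℕ × ℕ) where
  Adj u v := parentT u = v ∨ parentT v = u
  symm := ⟨by intro u v h; exact Or.symm h⟩
  loopless := ⟨by intro v h; simp [parentT, Prod.ext_iff] at h⟩

noncomputable def cutCard (S : Finset (ℕ × ℕ)) : ℕ :=
  Set.ncard {v : ℕ × ℕ | ¬ ((v ∈ S) ↔ (parentT v ∈ S))}

def leafCount (S : Finset (ℕ × ℕ)) : ℕ := (S.filter (fun v => v.1 = 0)).card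

def completeSubtree (v : ℕ × ℕ) : Finset (ℕ × ℕ) :=
  (Finset.range (v.1 + 1)).biUnion (fun a =>
    (Finset.Ico (v.2 * 2 ^ (v.1 - a)) ((v.2 + 1) * 2 ^ (v.1 - a))).image (fun i => (a, i)))

def Bd (d : ℕ) : Finset (ℕ × ℕ) := completeSubtree (d - 1, 0)

def cutBd (d : ℕ) (X : Finset (ℕ × ℕ)) : ℕ :=
  ((Bd d).filter (fun v => v.1 + 1 < d ∧ ¬((v ∈ X) ↔ parentT v ∈ X))).card

noncomputable def deltaB (d i : ℕ) : ℕ :=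
  sInf {c | ∃ X ⊆ Bd d, X.card = i ∧ cutBd d X = c}

noncomputable def tauC0 (n : ℕ) : ℕ := if n = 0 then 0 else tauC n

def fS (S : Finset (ℕ × ℕ)) (v : ℕ × ℕ) : ℤ :=
  if v ∈ S ∧ parentT v ∉ S then 2 ^ levelT v - 1
  else if v ∉ S ∧ parentT v ∈ S then -(2 ^ levelT v - 1)
  else 0


lemma nu_succ_eq (d : ℕ) : nu d + 1 = 2 ^ d := by
  have : 1 ≤ 2 ^ d := Nat.one_le_two_pow
  simp [nu]; omega

lemma sum_pow_eq (P : Multiset ℕ) :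
    (P.map (fun d => 2 ^ d)).sum = (P.map nu).sum + P.card := by
  induction P using Multiset.induction with
  | empty => simp
  | cons a s ih =>
    simp only [Multiset.map_cons, Multiset.sum_cons, Multiset.card_cons, ih]
    have := nu_succ_eq a
    omega

lemma extract : ∀ (m : ℕ) (D : Multiset ℕ), (∀ d ∈ D, d ≤ m) →
    2 ^ m ≤ (D.map (fun d => 2 ^ d)).sum →
    ∃ S, S ≤ D ∧ (S.map (fun d => 2 ^ d)).sum = 2 ^ m := by
  intro m
  induction m with
  | zero =>
    intro D hle hsum
    have hD : D ≠ 0 := by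
      rintro rfl; simp at hsum
    obtain ⟨d, hd⟩ := Multiset.exists_mem_of_ne_zero hD
    have : d = 0 := Nat.le_zero.mp (hle d hd)
    subst this
    exact ⟨{0}, Multiset.singleton_le.mpr hd, by simp⟩
  | succ m ih =>
    intro D hle hsum
    by_cases hm : (m + 1) ∈ D
    · exact ⟨{m + 1}, Multiset.singleton_le.mpr hm, by simp⟩
    · have hle' : ∀ d ∈ D, d ≤ m := by
        intro d hd
        have := hle d hd
        have : d ≠ m + 1 := fun h => hm (h ▸ hd)
        omega
      have h1 : 2 ^ m ≤ (D.map (fun d => 2 ^ d)).sum := by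
        have : (2:ℕ) ^ m ≤ 2 ^ (m+1) := Nat.pow_le_pow_right (by norm_num) (by omega)
        omega
      obtain ⟨S₁, hS₁le, hS₁sum⟩ := ih D hle' h1
      have hDeq : S₁ + (D - S₁) = D := by
        rw [add_comm]; exact tsub_add_cancel_of_le hS₁le
      have hmem' : ∀ d ∈ D - S₁, d ≤ m := by
        intro d hd
        exact hle' d (Multiset.mem_of_le (Multiset.sub_le_self D S₁) hd)
      have hsum' : 2 ^ m ≤ ((D - S₁).map (fun d => 2 ^ d)).sum := by
        have : ((S₁ + (D - S₁)).map (fun d => 2 ^ d)).sum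
            = (D.map (fun d => 2 ^ d)).sum := by rw [hDeq]
        rw [Multiset.map_add, Multiset.sum_add] at this
        have hp : (2:ℕ) ^ (m+1) = 2 ^ m + 2 ^ m := by ring
        omega
      obtain ⟨S₂, hS₂le, hS₂sum⟩ := ih (D - S₁) hmem' hsum'
      refine ⟨S₁ + S₂, ?_, ?_⟩
      · calc S₁ + S₂ ≤ S₁ + (D - S₁) := add_le_add (le_refl S₁) hS₂le
          _ = D := hDeq
      · rw [Multiset.map_add, Multiset.sum_add, hS₁sum, hS₂sum]; ring

lemma abp_dec (v : ℕ) (P : Multiset ℕ) (h : IsABP v P) (hv : 1 ≤ v) :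
    ∃ Q, IsABP (v - 1) Q ∧ Q.card ≤ P.card + 1 := by
  obtain ⟨hmem, hsum⟩ := h
  have hP : P ≠ 0 := by rintro rfl; simp at hsum; omega
  obtain ⟨d, hd⟩ := Multiset.exists_mem_of_ne_zero hP
  have hd1 : 1 ≤ d := hmem d hd
  have hcons : d ::ₘ P.erase d = P := Multiset.cons_erase hd
  have hsum' : nu d + ((P.erase d).map nu).sum = v := by
    rw [← hcons] at hsum; simpa using hsum
  have hmem' : ∀ i ∈ P.erase d, 1 ≤ i :=
    fun i hi => hmem i (Multiset.mem_of_mem_erase hi)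
  rcases eq_or_lt_of_le hd1 with h1 | h2
  · refine ⟨P.erase d, ⟨hmem', ?_⟩, ?_⟩
    · have : nu d = 1 := by rw [← h1]; simp [nu]
      omega
    · have h := Multiset.card_erase_of_mem hd
      have hc : 1 ≤ Multiset.card P := by
        rcases Nat.eq_zero_or_pos (Multiset.card P) with h0 | h1
        · rw [Multiset.card_eq_zero] at h0; subst h0; simp at hd
        · omega
      rw [h, Nat.pred_eq_sub_one]
      omega
  · refine ⟨(d-1) ::ₘ (d-1) ::ₘ P.erase d, ⟨?_, ?_⟩, ?_⟩
    · intro i hi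
      simp only [Multiset.mem_cons] at hi
      rcases hi with rfl | rfl | hi
      · omega
      · omega
      · exact hmem' i hi
    · simp only [Multiset.map_cons, Multiset.sum_cons]
      have hd2 : 2 * 2 ^ (d - 1) = 2 ^ d := by
        rw [← pow_succ']
        congr 1
        omega
      have h1 : 1 ≤ 2 ^ (d-1) := Nat.one_le_two_pow
      simp only [nu] at *
      omega
    · rw [Multiset.card_cons, Multiset.card_cons, Multiset.card_erase_of_mem hd,
        Nat.pred_eq_sub_one]
      have hc : 1 ≤ Multiset.card P := by
        rcases Nat.eq_zero_or_pos (Multiset.card P) with h0 | h1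
        · rw [Multiset.card_eq_zero] at h0; subst h0; simp at hd
        · omega
      omega

lemma abp_decs (j : ℕ) : ∀ (v : ℕ) (P : Multiset ℕ), IsABP v P → j ≤ v →
    ∃ Q, IsABP (v - j) Q ∧ Q.card ≤ P.card + j := by
  induction j with
  | zero => intro v P h _; exact ⟨P, by simpa using h, by omega⟩
  | succ j ih =>
    intro v P h hj
    obtain ⟨Q₁, hQ₁, hc₁⟩ := abp_dec v P h (by omega)
    obtain ⟨Q, hQ, hc⟩ := ih (v - 1) Q₁ hQ₁ (by omega)
    refine ⟨Q, ?_, by omega⟩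
    have : v - 1 - j = v - (j + 1) := by omega
    rwa [this] at hQ

lemma abp_replicate (n : ℕ) : IsABP n (Multiset.replicate n 1) := by
  constructor
  · intro i hi
    rw [Multiset.eq_of_mem_replicate hi]
  · rw [Multiset.map_replicate, Multiset.sum_replicate]
    simp [nu]

lemma tauP_mem (n : ℕ) :
    ∃ P : Multiset ℕ, IsABP n P ∧ P.card = tauP n := by
  have h : {k | ∃ P : Multiset ℕ, IsABP n P ∧ P.card = k}.Nonempty :=
    ⟨(Multiset.replicate n 1).card, Multiset.replicate n 1, abp_replicate n, rfl⟩
  exact Nat.sInf_mem h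

lemma tauP_le {n k : ℕ} (P : Multiset ℕ) (hP : IsABP n P) (hk : P.card ≤ k) :
    tauP n ≤ k :=
  le_trans (Nat.sInf_le ⟨P, hP, rfl⟩) hk

lemma tauP_pos {n : ℕ} (hn : 1 ≤ n) : 1 ≤ tauP n := by
  obtain ⟨P, hP, hc⟩ := tauP_mem n
  rcases Nat.eq_zero_or_pos P.card with h0 | h1
  · exfalso
    rw [Multiset.card_eq_zero] at h0
    subst h0
    have := hP.2
    simp at this
    omega
  · omega

lemma abp_lower (n : ℕ) (hn : 1 ≤ n) (P : Multiset ℕ) (hP : IsABP n P) :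
    ∃ Q, IsABP (n - nu (Nat.log 2 (n + 1))) Q ∧ Q.card + 1 ≤ P.card := by
  set m := Nat.log 2 (n + 1) with hm
  obtain ⟨hmem, hsum⟩ := hP
  have hpow : 2 ^ m ≤ n + 1 := Nat.pow_log_le_self 2 (by omega)
  have hcard : 1 ≤ P.card := by
    rcases Nat.eq_zero_or_pos P.card with h0 | h1
    · exfalso; rw [Multiset.card_eq_zero] at h0; subst h0; simp at hsum; omega
    · omega
  have hdle : ∀ d ∈ P, d ≤ m := by
    intro d hd
    have h1 : nu d ≤ (P.map nu).sum :=
      Multiset.single_le_sum (fun x _ => Nat.zero_le x) (nu d)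
        (Multiset.mem_map_of_mem nu hd)
    have h2 : 2 ^ d ≤ n + 1 := by
      have := nu_succ_eq d
      omega
    exact (Nat.le_log_iff_pow_le (by norm_num) (by omega)).mpr h2
  have hpsum : 2 ^ m ≤ (P.map (fun d => 2 ^ d)).sum := by
    rw [sum_pow_eq]
    omega
  obtain ⟨S, hSle, hSsum⟩ := extract m P hdle hpsum
  have hScard : 1 ≤ S.card := by
    rcases Nat.eq_zero_or_pos S.card with h0 | h1
    · exfalso; rw [Multiset.card_eq_zero] at h0; subst h0; simp at hSsum
      have : 1 ≤ 2 ^ m := Nat.one_le_two_pow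
      omega
    · omega
  have hSnu : (S.map nu).sum + S.card = 2 ^ m := by
    have := sum_pow_eq S
    omega
  have hPeq : S + (P - S) = P := by
    rw [add_comm]; exact tsub_add_cancel_of_le hSle
  have hsplit : (S.map nu).sum + ((P - S).map nu).sum = n := by
    have : ((S + (P - S)).map nu).sum = n := by rw [hPeq]; exact hsum
    rwa [Multiset.map_add, Multiset.sum_add] at this
  have hcardsplit : S.card + (P - S).card = P.card := by
    have : (S + (P - S)).card = P.card := by rw [hPeq]
    simpa using this
  set v := ((P - S).map nu).sum with hv
  have hR : IsABP v (P - S) :=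
    ⟨fun i hi => hmem i (Multiset.mem_of_le (Multiset.sub_le_self P S) hi), rfl⟩
  have hjv : S.card - 1 ≤ v := by omega
  obtain ⟨Q, hQ, hQc⟩ := abp_decs (S.card - 1) v (P - S) hR hjv
  have hval : v - (S.card - 1) = n - nu m := by
    have h1 : 1 ≤ 2 ^ m := Nat.one_le_two_pow
    simp only [nu]
    omega
  rw [hval] at hQ
  exact ⟨Q, hQ, by omega⟩

theorem stmt2 :
    (∀ k : ℕ, 1 ≤ k → tauP (2 ^ k - 1) = 1) ∧
    (∀ n : ℕ, 1 ≤ n → (¬ ∃ k : ℕ, 1 ≤ k ∧ n = 2 ^ k - 1) →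
      tauP n = 1 + tauP (n - (2 ^ Nat.log 2 (n + 1) - 1))) := by

  have key : ∀ n : ℕ, 1 ≤ n → tauP n = 1 + tauP (n - (2 ^ Nat.log 2 (n + 1) - 1)) := by
    intro n hn
    set m := Nat.log 2 (n + 1) with hm
    have hpow : 2 ^ m ≤ n + 1 := Nat.pow_log_le_self 2 (by omega)
    have hm1 : 1 ≤ m := Nat.log_pos (by norm_num) (by omega)
    have h1 : 1 ≤ 2 ^ m := Nat.one_le_two_pow
    have hnu : n - (2 ^ m - 1) = n - nu m := by simp [nu]
    rw [hnu]
    apply le_antisymm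
    · -- upper bound: extend an optimal ABP of n - nu m with part m
      obtain ⟨Q, hQ, hQc⟩ := tauP_mem (n - nu m)
      refine tauP_le (m ::ₘ Q) ⟨?_, ?_⟩ ?_
      · intro i hi
        rcases Multiset.mem_cons.mp hi with rfl | hi
        · exact hm1
        · exact hQ.1 i hi
      · simp only [Multiset.map_cons, Multiset.sum_cons, hQ.2]
        simp only [nu]
        omega
      · simp only [Multiset.card_cons, hQc]
        omega
    · -- lower bound
      obtain ⟨P, hP, hPc⟩ := tauP_mem n
      obtain ⟨Q, hQ, hQc⟩ := abp_lower n hn P hP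
      rw [← hm] at hQ
      have := tauP_le Q hQ (le_refl _)
      omega
  constructor
  · intro k hk
    have h1 : 1 ≤ 2 ^ k := Nat.one_le_two_pow
    have hmem1 : (1 : ℕ) ∈ {j | ∃ P : Multiset ℕ, IsABP (2 ^ k - 1) P ∧ P.card = j} := by
      refine ⟨{k}, ⟨?_, ?_⟩, by simp⟩
      · intro i hi; rw [Multiset.mem_singleton] at hi; omega
      · simp [nu]
    have hle : tauP (2 ^ k - 1) ≤ 1 := Nat.sInf_le hmem1
    have h2 : 2 ≤ 2 ^ k := by
      calc 2 = 2 ^ 1 := by norm_num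
        _ ≤ 2 ^ k := Nat.pow_le_pow_right (by norm_num) hk
    have hge : 1 ≤ tauP (2 ^ k - 1) := tauP_pos (by omega)
    omega
  · intro n hn _
    exact key n hn
end

section
/- Every positive integer n admits a minimal signed almost binary partition (P, N) in normal form, i.e., one achieving τ(n) = |P| + |N| such that: (A) P and N are disjoint as sets; (B) P and N are the greedy almost binary partitions of their respective sums; (C) max(P) ∈ {⌊log₂ n⌋, ⌊log₂ n⌋ + 1}. -/
/- ======= auxiliary lemmas ======= -/

lemma greedy_zero : greedy 0 = 0 := by rw [greedy]

lemma greedy_succ (n : ℕ) : greedy (n+1)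
    = Nat.log 2 (n+2) ::ₘ greedy (n + 1 - nu (Nat.log 2 (n+2))) := by
  rw [greedy]

lemma nu_pos {d : ℕ} (hd : 1 ≤ d) : 1 ≤ nu d := by
  have : 2^1 ≤ 2^d := Nat.pow_le_pow_right (by norm_num) hd
  simp only [nu]; omega

lemma greedy_isABP (m : ℕ) : IsABP m (greedy m) := by
  induction m using Nat.strong_induction_on with
  | _ m ih =>
    match m with
    | 0 => exact ⟨by simp [greedy_zero], by simp [greedy_zero]⟩
    | (k+1) =>
      rw [greedy_succ]
      set d := Nat.log 2 (k+2) with hd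
      have hd1 : 1 ≤ d := Nat.log_pos one_lt_two (by omega)
      have hpow : 2 ^ d ≤ k + 2 := Nat.pow_log_le_self 2 (by omega)
      have h2 : 2^1 ≤ 2^d := Nat.pow_le_pow_right (by norm_num) hd1
      have hnu : nu d ≤ k + 1 := by simp only [nu]; omega
      have hnup : 1 ≤ nu d := nu_pos hd1
      have hlt : k + 1 - nu d < k + 1 := by omega
      obtain ⟨h1, hsum⟩ := ih _ hlt
      refine ⟨?_, ?_⟩
      · intro i hi
        rcases Multiset.mem_cons.mp hi with h | h
        · omega
        · exact h1 i h
      · simp only [Multiset.map_cons, Multiset.sum_cons, hsum]; omega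

def Struct (P : Multiset ℕ) : Prop :=
  (∀ i ∈ P, 1 ≤ i) ∧ (∀ b, P.count b ≤ 2) ∧ (∀ b c, c < b → 2 ≤ P.count b → P.count c = 0)

lemma struct_erase {P : Multiset ℕ} (h : Struct P) (a : ℕ) : Struct (P.erase a) := by
  obtain ⟨h1, h2, h3⟩ := h
  refine ⟨fun i hi => h1 i (Multiset.mem_of_mem_erase hi), fun b => ?_, fun b c hcb hb => ?_⟩
  · exact le_trans (Multiset.count_le_of_le b (Multiset.erase_le a P)) (h2 b)
  · have : 2 ≤ P.count b := le_trans hb (Multiset.count_le_of_le b (Multiset.erase_le a P))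
    have := h3 b c hcb this
    have := Multiset.count_le_of_le c (Multiset.erase_le a P)
    omega

lemma sum_le_of_struct : ∀ (m : ℕ) (P : Multiset ℕ), Struct P → (∀ i ∈ P, i ≤ m) →
    (P.map nu).sum ≤ 2^(m+1) - 2 := by
  intro m
  induction m using Nat.strong_induction_on with
  | _ m ih =>
    intro P hS hle
    rcases eq_or_ne P 0 with rfl | hne
    · simp
    obtain ⟨h1, h2, h3⟩ := hS
    have hm1 : 1 ≤ m := by
      obtain ⟨x, hx⟩ := Multiset.exists_mem_of_ne_zero hne
      exact le_trans (h1 x hx) (hle x hx)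
    have hone : (1:ℕ) ≤ 2^m := Nat.one_le_two_pow
    have hpow2 : 2*2^m = 2^(m+1) := by rw [pow_succ]; ring
    rcases Nat.lt_or_ge (P.count m) 1 with hc | hc
    · have hnm : m ∉ P := fun h => absurd (Multiset.count_pos.mpr h) (by omega)
      have hle' : ∀ i ∈ P, i ≤ m - 1 := by
        intro i hi
        have h' := hle i hi
        have : i ≠ m := fun h => hnm (h ▸ hi)
        omega
      have hb := ih (m-1) (by omega) P ⟨h1,h2,h3⟩ hle'
      have hpow : 2^(m-1+1) ≤ 2^m := Nat.pow_le_pow_right (by norm_num) (by omega)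
      omega
    rcases Nat.lt_or_ge (P.count m) 2 with hc2 | hc2
    · have hmem : m ∈ P := Multiset.count_pos.mp (by omega)
      have hPe : P = m ::ₘ P.erase m := (Multiset.cons_erase hmem).symm
      have hle' : ∀ i ∈ P.erase m, i ≤ m - 1 := by
        intro i hi
        have h1' := Multiset.mem_of_mem_erase hi
        have := hle i h1'
        have : i ≠ m := fun h => by
          subst h
          have hz : (P.erase i).count i = 0 := by rw [Multiset.count_erase_self]; omega
          exact absurd (Multiset.count_pos.mpr hi) (by omega)
        omega
      have hb := ih (m-1) (by omega) (P.erase m) (struct_erase ⟨h1,h2,h3⟩ m) hle'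
      have hpow : 2^(m-1+1) ≤ 2^m := Nat.pow_le_pow_right (by norm_num) (by omega)
      conv_lhs => rw [hPe]
      simp only [Multiset.map_cons, Multiset.sum_cons, nu]
      omega
    · have hrep : P = Multiset.replicate 2 m := by
        ext a
        rw [Multiset.count_replicate]
        split_ifs with ha
        · have := h2 m; subst ha; omega
        · rcases Nat.lt_trichotomy a m with h | h | h
          · exact h3 m a h hc2
          · exact absurd h.symm ha
          · refine Multiset.count_eq_zero_of_notMem fun hmem => ?_
            exact absurd (hle a hmem) (by omega)
      rw [hrep]
      show (Multiset.map nu (m ::ₘ m ::ₘ 0)).sum ≤ _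
      simp only [Multiset.map_cons, Multiset.sum_cons, Multiset.map_zero, Multiset.sum_zero, nu]
      omega

lemma exists_max {P : Multiset ℕ} (h : P ≠ 0) : ∃ m ∈ P, ∀ i ∈ P, i ≤ m := by
  induction P using Multiset.induction with
  | empty => exact absurd rfl h
  | cons a s ihs =>
    rcases eq_or_ne s 0 with rfl | hs
    · exact ⟨a, Multiset.mem_cons_self a 0, by intro i hi; simp at hi; omega⟩
    · obtain ⟨m, hm, hmax⟩ := ihs hs
      rcases le_or_gt a m with h' | h'
      · exact ⟨m, Multiset.mem_cons_of_mem hm, by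
          intro i hi
          rcases Multiset.mem_cons.mp hi with rfl | hi
          · exact h'
          · exact hmax i hi⟩
      · exact ⟨a, Multiset.mem_cons_self a s, by
          intro i hi
          rcases Multiset.mem_cons.mp hi with rfl | hi
          · exact le_refl _
          · exact le_trans (hmax i hi) h'.le⟩

lemma greedy_pos_eq {s m : ℕ} (hs1 : 1 ≤ s) (hlog : Nat.log 2 (s+1) = m) :
    greedy s = m ::ₘ greedy (s - nu m) := by
  obtain ⟨k, rfl⟩ : ∃ k, s = k + 1 := ⟨s - 1, by omega⟩
  rw [greedy_succ, show k + 2 = k + 1 + 1 from rfl, hlog]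

lemma greedy_of_struct (P : Multiset ℕ) (h : Struct P) : P = greedy ((P.map nu).sum) := by
  revert h
  induction P using Multiset.strongInductionOn with
  | _ P ih =>
    intro h
    rcases eq_or_ne P 0 with rfl | hne
    · simp [greedy_zero]
    obtain ⟨m, hm, hmax⟩ := exists_max hne
    obtain ⟨h1, h2, h3⟩ := h
    have hm1 : 1 ≤ m := h1 m hm
    have h2m : 2^1 ≤ 2^m := Nat.pow_le_pow_right (by norm_num) hm1
    obtain ⟨s, hs⟩ : ∃ s, (P.map nu).sum = s := ⟨_, rfl⟩
    rw [hs]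
    have hnum : nu m ≤ s := hs ▸ Multiset.le_sum_of_mem (Multiset.mem_map_of_mem nu hm)
    have hnump : (1:ℕ) ≤ nu m := by simp only [nu]; omega
    have hsub : s ≤ 2^(m+1) - 2 := hs ▸ sum_le_of_struct m P ⟨h1,h2,h3⟩ hmax
    have hs1 : 1 ≤ s := le_trans hnump hnum
    have hlog : Nat.log 2 (s+1) = m := by
      refine Nat.log_eq_of_pow_le_of_lt_pow ?_ ?_
      · simp only [nu] at hnum; omega
      · have : 2^(m+1) = 2*2^m := by rw [pow_succ]; ring
        omega
    have hgs : greedy s = m ::ₘ greedy (s - nu m) := greedy_pos_eq hs1 hlog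
    have hPe : P = m ::ₘ P.erase m := (Multiset.cons_erase hm).symm
    have hsum' : ((P.erase m).map nu).sum = s - nu m := by
      conv_rhs => rw [← hs]
      conv_rhs => rw [hPe]
      simp only [Multiset.map_cons, Multiset.sum_cons]
      omega
    have := ih (P.erase m) (Multiset.erase_lt.mpr hm) (struct_erase ⟨h1,h2,h3⟩ m)
    rw [hsum'] at this
    rw [hgs, ← this, ← hPe]

def Wf (P N : Multiset ℕ) : ℕ := (P.map (2 ^ ·)).sum + (N.map (2 ^ ·)).sum
def W3f (P N : Multiset ℕ) : ℕ := P.sum + N.sum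

lemma map_sum_split (f : ℕ → ℕ) {A P : Multiset ℕ} (hA : A ≤ P) :
    (P.map f).sum = ((P - A).map f).sum + (A.map f).sum := by
  conv_lhs => rw [← tsub_add_cancel_of_le hA]
  simp [Multiset.map_add]

lemma card_split {A P : Multiset ℕ} (hA : A ≤ P) : P.card = (P - A).card + A.card := by
  conv_lhs => rw [← tsub_add_cancel_of_le hA]
  simp

lemma sum_split {A P : Multiset ℕ} (hA : A ≤ P) : P.sum = (P - A).sum + A.sum := by
  conv_lhs => rw [← tsub_add_cancel_of_le hA]
  simp

lemma isSABP_replace {n : ℕ} {P N A B A' B' : Multiset ℕ}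
    (h : IsSABP n P N) (hA : A ≤ P) (hB : B ≤ N)
    (hA' : ∀ i ∈ A', 1 ≤ i) (hB' : ∀ j ∈ B', 1 ≤ j)
    (key : ((A.map nu).sum : ℤ) - ((B.map nu).sum : ℤ)
         = (((A'.map nu).sum : ℤ) - ((B'.map nu).sum : ℤ))) :
    IsSABP n (P - A + A') (N - B + B') := by
  obtain ⟨h1, h2, h3⟩ := h
  refine ⟨?_, ?_, ?_⟩
  · intro i hi
    rcases Multiset.mem_add.mp hi with hi | hi
    · exact h1 i (Multiset.mem_of_le (Multiset.sub_le_self P A) hi)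
    · exact hA' i hi
  · intro j hj
    rcases Multiset.mem_add.mp hj with hj | hj
    · exact h2 j (Multiset.mem_of_le (Multiset.sub_le_self N B) hj)
    · exact hB' j hj
  · have e1 := map_sum_split nu hA
    have e2 := map_sum_split nu hB
    simp only [Multiset.map_add, Multiset.sum_add]
    push_cast [e1, e2] at h3 ⊢
    push_cast at key
    linarith

lemma no_improve {n : ℕ} {P N : Multiset ℕ} (hS : IsSABP n P N)
    (hτ : ∀ P' N', IsSABP n P' N' → P.card + N.card ≤ P'.card + N'.card)
    (hW : ∀ P' N', IsSABP n P' N' → P'.card + N'.card = P.card + N.card → Wf P N ≤ Wf P' N')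
    (hW3 : ∀ P' N', IsSABP n P' N' → P'.card + N'.card = P.card + N.card → Wf P' N' = Wf P N →
      W3f P N ≤ W3f P' N')
    {A B A' B' : Multiset ℕ} (hA : A ≤ P) (hB : B ≤ N)
    (hA' : ∀ i ∈ A', 1 ≤ i) (hB' : ∀ j ∈ B', 1 ≤ j)
    (key : ((A.map nu).sum : ℤ) - ((B.map nu).sum : ℤ)
         = (((A'.map nu).sum : ℤ) - ((B'.map nu).sum : ℤ)))
    (hlex : A'.card + B'.card < A.card + B.card ∨
      (A'.card + B'.card = A.card + B.card ∧
        ((A'.map (2^·)).sum + (B'.map (2^·)).sum < (A.map (2^·)).sum + (B.map (2^·)).sum ∨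
        ((A'.map (2^·)).sum + (B'.map (2^·)).sum = (A.map (2^·)).sum + (B.map (2^·)).sum ∧
          A'.sum + B'.sum < A.sum + B.sum)))) :
    False := by
  have hS' := isSABP_replace hS hA hB hA' hB' key
  have hcP := card_split hA
  have hcN := card_split hB
  have hcP' : (P - A + A').card = (P - A).card + A'.card := by simp
  have hcN' : (N - B + B').card = (N - B).card + B'.card := by simp
  have hwP := map_sum_split (2 ^ ·) hA
  have hwN := map_sum_split (2 ^ ·) hB
  have hwP' : ((P - A + A').map (2 ^ ·)).sum = ((P - A).map (2 ^ ·)).sum + (A'.map (2 ^ ·)).sum := by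
    simp [Multiset.map_add]
  have hwN' : ((N - B + B').map (2 ^ ·)).sum = ((N - B).map (2 ^ ·)).sum + (B'.map (2 ^ ·)).sum := by
    simp [Multiset.map_add]
  have hsP := sum_split hA
  have hsN := sum_split hB
  have hsP' : (P - A + A').sum = (P - A).sum + A'.sum := by simp
  have hsN' : (N - B + B').sum = (N - B).sum + B'.sum := by simp
  rcases hlex with hlt | ⟨hceq, hW2⟩
  · have := hτ _ _ hS'
    omega
  · have hcard' : (P - A + A').card + (N - B + B').card = P.card + N.card := by omega
    rcases hW2 with hlt | ⟨hweq, h3lt⟩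
    · have := hW _ _ hS' hcard'
      simp only [Wf] at this
      omega
    · have hweq' : Wf (P - A + A') (N - B + B') = Wf P N := by
        simp only [Wf]; omega
      have := hW3 _ _ hS' hcard' hweq'
      simp only [W3f] at this
      omega

lemma le1 {P : Multiset ℕ} {x : ℕ} (hx : x ∈ P) : ({x} : Multiset ℕ) ≤ P :=
  Multiset.singleton_le.mpr hx

lemma le2same {P : Multiset ℕ} {x : ℕ} (hx : 2 ≤ P.count x) : (x ::ₘ {x} : Multiset ℕ) ≤ P := by
  rw [Multiset.le_iff_count]
  intro a
  simp only [Multiset.count_cons, Multiset.count_singleton]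
  split_ifs with h
  · subst h; omega
  · omega

lemma le3 {P : Multiset ℕ} {x y : ℕ} (hxy : y ≠ x) (hx : 2 ≤ P.count x) (hy : y ∈ P) :
    (x ::ₘ x ::ₘ {y} : Multiset ℕ) ≤ P := by
  rw [Multiset.le_iff_count]
  intro a
  have hy' := Multiset.count_pos.mpr hy
  simp only [Multiset.count_cons, Multiset.count_singleton]
  split_ifs with h1 h2 h2
  · exact absurd (h1 ▸ h2 : y = x) hxy
  · subst h1; omega
  · subst h2; omega
  · omega

lemma le3same {P : Multiset ℕ} {x : ℕ} (hx : 3 ≤ P.count x) : (x ::ₘ x ::ₘ {x} : Multiset ℕ) ≤ P := by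
  rw [Multiset.le_iff_count]
  intro a
  simp only [Multiset.count_cons, Multiset.count_singleton]
  split_ifs with h
  · subst h; omega
  · omega

theorem stmt9 (n : ℕ) (hn : 1 ≤ n) :
    ∃ P N : Multiset ℕ, IsSABP n P N ∧ P.card + N.card = tau n ∧
      (∀ i, i ∈ P → i ∉ N) ∧
      P = greedy ((P.map nu).sum) ∧ N = greedy ((N.map nu).sum) ∧
      ∃ m ∈ P, (∀ i ∈ P, i ≤ m) ∧ (m = Nat.log 2 n ∨ m = Nat.log 2 n + 1) := by
  classical
  obtain ⟨hg1, hg2⟩ := greedy_isABP n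
  have hSg : IsSABP n (greedy n) 0 := ⟨hg1, by simp, by simp [hg2]⟩
  have hτmem : tau n ∈ {k | ∃ P N : Multiset ℕ, IsSABP n P N ∧ P.card + N.card = k} :=
    Nat.sInf_mem ⟨(greedy n).card + Multiset.card 0, greedy n, 0, hSg, rfl⟩
  obtain ⟨P0, N0, hS0, hc0⟩ := hτmem
  have hτmin : ∀ P' N', IsSABP n P' N' → tau n ≤ P'.card + N'.card :=
    fun P' N' h' => Nat.sInf_le ⟨P', N', h', rfl⟩
  have hW1ne : {w | ∃ P N : Multiset ℕ, IsSABP n P N ∧ P.card + N.card = tau n ∧ Wf P N = w}.Nonempty :=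
    ⟨Wf P0 N0, P0, N0, hS0, hc0, rfl⟩
  obtain ⟨P1, N1, hS1, hc1, hw1⟩ := Nat.sInf_mem hW1ne
  have hWmin : ∀ P' N', IsSABP n P' N' → P'.card + N'.card = tau n →
      Wf P1 N1 ≤ Wf P' N' := by
    intro P' N' h' hc'
    rw [hw1]
    exact Nat.sInf_le ⟨P', N', h', hc', rfl⟩
  have hW3ne : {w | ∃ P N : Multiset ℕ, IsSABP n P N ∧ P.card + N.card = tau n ∧
      Wf P N = Wf P1 N1 ∧ W3f P N = w}.Nonempty :=
    ⟨W3f P1 N1, P1, N1, hS1, hc1, rfl, rfl⟩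
  obtain ⟨P, N, hS, hcard, hWeq, hW3eq⟩ := Nat.sInf_mem hW3ne
  have hτ' : ∀ P' N', IsSABP n P' N' → P.card + N.card ≤ P'.card + N'.card := by
    intro P' N' h'; rw [hcard]; exact hτmin P' N' h'
  have hW' : ∀ P' N', IsSABP n P' N' → P'.card + N'.card = P.card + N.card →
      Wf P N ≤ Wf P' N' := by
    intro P' N' h' hc'; rw [hWeq]; exact hWmin P' N' h' (by omega)
  have hW3' : ∀ P' N', IsSABP n P' N' → P'.card + N'.card = P.card + N.card →
      Wf P' N' = Wf P N → W3f P N ≤ W3f P' N' := by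
    intro P' N' h' hc' hw'
    rw [hW3eq]
    exact Nat.sInf_le ⟨P', N', h', by omega, by rw [hw', hWeq], rfl⟩
  obtain ⟨hP1, hN1, hsum⟩ := hS
  have hS : IsSABP n P N := ⟨hP1, hN1, hsum⟩
  -- (A) disjointness
  have hdisj : ∀ i, i ∈ P → i ∉ N := by
    intro i hiP hiN
    exact no_improve hS hτ' hW' hW3' (le1 hiP) (le1 hiN)
      (A' := 0) (B' := 0) (by simp) (by simp) (by simp) (Or.inl (by simp))
  -- structure of P
  have hcountP : ∀ b, P.count b ≤ 2 := by
    intro b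
    by_contra hb
    push_neg at hb
    have hbm : b ∈ P := Multiset.count_pos.mp (by omega)
    have hb1 : 1 ≤ b := hP1 b hbm
    rcases eq_or_lt_of_le hb1 with hb1' | hb2
    · -- b = 1 : {1,1,1} → {2}
      refine no_improve hS hτ' hW' hW3' (le3same (hb1' ▸ hb : 3 ≤ P.count b))
        (Multiset.zero_le N) (A' := ({2} : Multiset ℕ)) (B' := 0)
        (by intro i hi; simp at hi; omega) (by simp) ?_ (Or.inl (by simp [← hb1']))
      subst hb1'
      simp [nu]
    · -- b ≥ 2 : {b,b,b} → {b+1,b-1,b-1}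
      have e1 : 2^b = 2*2^(b-1) := by
        conv_lhs => rw [show b = b - 1 + 1 by omega, pow_succ]
        ring
      have e2 : 2^(b+1) = 2^b*2 := pow_succ 2 b
      have e3 : (1:ℕ) ≤ 2^(b-1) := Nat.one_le_two_pow
      refine no_improve hS hτ' hW' hW3' (le3same hb) (Multiset.zero_le N)
        (A' := ((b+1) ::ₘ (b-1) ::ₘ {b-1} : Multiset ℕ)) (B' := 0)
        (by intro i hi; simp at hi; omega) (by simp) ?_
        (Or.inr ⟨by simp, Or.inr ⟨?_, ?_⟩⟩)
      · simp only [Multiset.map_cons, Multiset.map_singleton, Multiset.sum_cons,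
          Multiset.sum_singleton, Multiset.map_zero, Multiset.sum_zero, nu]
        omega
      · simp only [Multiset.map_cons, Multiset.map_singleton, Multiset.sum_cons,
          Multiset.sum_singleton, Multiset.map_zero, Multiset.sum_zero]
        omega
      · simp only [Multiset.sum_cons, Multiset.sum_singleton, Multiset.sum_zero]
        omega
  have hccP : ∀ b c, c < b → 2 ≤ P.count b → P.count c = 0 := by
    intro b c hcb hb
    by_contra hc
    have hcm : c ∈ P := Multiset.count_pos.mp (by omega)
    have hc1 : 1 ≤ c := hP1 c hcm
    have hbm : b ∈ P := Multiset.count_pos.mp (by omega)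
    have hb2 : 2 ≤ b := by omega
    have e2 : 2^(b+1) = 2^b*2 := pow_succ 2 b
    have e3 : (1:ℕ) ≤ 2^b := Nat.one_le_two_pow
    rcases eq_or_lt_of_le hc1 with hc1' | hc2
    · -- c = 1 : {b,b,1} → {b+1}
      refine no_improve hS hτ' hW' hW3' (le3 (by omega) hb (hc1' ▸ hcm))
        (Multiset.zero_le N) (A' := ({b+1} : Multiset ℕ)) (B' := 0)
        (by intro i hi; simp at hi; omega) (by simp) ?_ (Or.inl (by simp))
      simp only [Multiset.map_cons, Multiset.map_singleton, Multiset.sum_cons,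
        Multiset.sum_singleton, Multiset.map_zero, Multiset.sum_zero, nu]
      omega
    · -- c ≥ 2 : {b,b,c} → {b+1,c-1,c-1}
      have e4 : 2^c = 2*2^(c-1) := by
        conv_lhs => rw [show c = c - 1 + 1 by omega, pow_succ]
        ring
      have e5 : (1:ℕ) ≤ 2^(c-1) := Nat.one_le_two_pow
      refine no_improve hS hτ' hW' hW3' (le3 (by omega) hb hcm) (Multiset.zero_le N)
        (A' := ((b+1) ::ₘ (c-1) ::ₘ {c-1} : Multiset ℕ)) (B' := 0)
        (by intro i hi; simp at hi; omega) (by simp) ?_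
        (Or.inr ⟨by simp, Or.inr ⟨?_, ?_⟩⟩)
      · simp only [Multiset.map_cons, Multiset.map_singleton, Multiset.sum_cons,
          Multiset.sum_singleton, Multiset.map_zero, Multiset.sum_zero, nu]
        omega
      · simp only [Multiset.map_cons, Multiset.map_singleton, Multiset.sum_cons,
          Multiset.sum_singleton, Multiset.map_zero, Multiset.sum_zero]
        omega
      · simp only [Multiset.sum_cons, Multiset.sum_singleton, Multiset.sum_zero]
        omega
  -- structure of N
  have hcountN : ∀ b, N.count b ≤ 2 := by
    intro b
    by_contra hb
    push_neg at hb
    have hbm : b ∈ N := Multiset.count_pos.mp (by omega)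
    have hb1 : 1 ≤ b := hN1 b hbm
    rcases eq_or_lt_of_le hb1 with hb1' | hb2
    · refine no_improve hS hτ' hW' hW3' (Multiset.zero_le P)
        (le3same (hb1' ▸ hb : 3 ≤ N.count b)) (A' := 0) (B' := ({2} : Multiset ℕ))
        (by simp) (by intro i hi; simp at hi; omega) ?_ (Or.inl (by simp [← hb1']))
      subst hb1'
      simp [nu]
    · have e1 : 2^b = 2*2^(b-1) := by
        conv_lhs => rw [show b = b - 1 + 1 by omega, pow_succ]
        ring
      have e2 : 2^(b+1) = 2^b*2 := pow_succ 2 b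
      have e3 : (1:ℕ) ≤ 2^(b-1) := Nat.one_le_two_pow
      refine no_improve hS hτ' hW' hW3' (Multiset.zero_le P) (le3same hb)
        (A' := 0) (B' := ((b+1) ::ₘ (b-1) ::ₘ {b-1} : Multiset ℕ))
        (by simp) (by intro i hi; simp at hi; omega) ?_
        (Or.inr ⟨by simp, Or.inr ⟨?_, ?_⟩⟩)
      · simp only [Multiset.map_cons, Multiset.map_singleton, Multiset.sum_cons,
          Multiset.sum_singleton, Multiset.map_zero, Multiset.sum_zero, nu]
        omega
      · simp only [Multiset.map_cons, Multiset.map_singleton, Multiset.sum_cons,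
          Multiset.sum_singleton, Multiset.map_zero, Multiset.sum_zero]
        omega
      · simp only [Multiset.sum_cons, Multiset.sum_singleton, Multiset.sum_zero]
        omega
  have hccN : ∀ b c, c < b → 2 ≤ N.count b → N.count c = 0 := by
    intro b c hcb hb
    by_contra hc
    have hcm : c ∈ N := Multiset.count_pos.mp (by omega)
    have hc1 : 1 ≤ c := hN1 c hcm
    have hbm : b ∈ N := Multiset.count_pos.mp (by omega)
    have hb2 : 2 ≤ b := by omega
    have e2 : 2^(b+1) = 2^b*2 := pow_succ 2 b
    have e3 : (1:ℕ) ≤ 2^b := Nat.one_le_two_pow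
    rcases eq_or_lt_of_le hc1 with hc1' | hc2
    · refine no_improve hS hτ' hW' hW3' (Multiset.zero_le P)
        (le3 (by omega) hb (hc1' ▸ hcm)) (A' := 0) (B' := ({b+1} : Multiset ℕ))
        (by simp) (by intro i hi; simp at hi; omega) ?_ (Or.inl (by simp))
      simp only [Multiset.map_cons, Multiset.map_singleton, Multiset.sum_cons,
        Multiset.sum_singleton, Multiset.map_zero, Multiset.sum_zero, nu]
      omega
    · have e4 : 2^c = 2*2^(c-1) := by
        conv_lhs => rw [show c = c - 1 + 1 by omega, pow_succ]
        ring
      have e5 : (1:ℕ) ≤ 2^(c-1) := Nat.one_le_two_pow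
      refine no_improve hS hτ' hW' hW3' (Multiset.zero_le P) (le3 (by omega) hb hcm)
        (A' := 0) (B' := ((b+1) ::ₘ (c-1) ::ₘ {c-1} : Multiset ℕ))
        (by simp) (by intro i hi; simp at hi; omega) ?_
        (Or.inr ⟨by simp, Or.inr ⟨?_, ?_⟩⟩)
      · simp only [Multiset.map_cons, Multiset.map_singleton, Multiset.sum_cons,
          Multiset.sum_singleton, Multiset.map_zero, Multiset.sum_zero, nu]
        omega
      · simp only [Multiset.map_cons, Multiset.map_singleton, Multiset.sum_cons,
          Multiset.sum_singleton, Multiset.map_zero, Multiset.sum_zero]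
        omega
      · simp only [Multiset.sum_cons, Multiset.sum_singleton, Multiset.sum_zero]
        omega
  -- basic sums
  have hs_eq : (P.map nu).sum = n + (N.map nu).sum := by omega
  have hPne : P ≠ 0 := by
    intro h
    rw [h] at hs_eq
    simp at hs_eq
    omega
  -- 1 ∉ N
  have h1N : (1:ℕ) ∉ N := by
    intro h1N
    obtain ⟨x, hxP⟩ := Multiset.exists_mem_of_ne_zero hPne
    have hx1 : 1 ≤ x := hP1 x hxP
    have hx2 : 2 ≤ x := by
      rcases eq_or_lt_of_le hx1 with h | h
      · exact absurd h1N (h ▸ hdisj x hxP)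
      · omega
    have e1 : 2^x = 2*2^(x-1) := by
      conv_lhs => rw [show x = x - 1 + 1 by omega, pow_succ]
      ring
    have e3 : (1:ℕ) ≤ 2^(x-1) := Nat.one_le_two_pow
    refine no_improve hS hτ' hW' hW3' (le1 hxP) (le1 h1N)
      (A' := ((x-1) ::ₘ {x-1} : Multiset ℕ)) (B' := 0)
      (by intro i hi; simp at hi; omega) (by simp) ?_
      (Or.inr ⟨by simp, Or.inl ?_⟩)
    · simp only [Multiset.map_cons, Multiset.map_singleton, Multiset.sum_cons,
        Multiset.sum_singleton, Multiset.map_zero, Multiset.sum_zero, nu]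
      omega
    · simp only [Multiset.map_cons, Multiset.map_singleton, Multiset.sum_cons,
        Multiset.sum_singleton, Multiset.map_zero, Multiset.sum_zero]
      omega
  -- no y ∈ N with y+1 ∈ P
  have hgap1 : ∀ y ∈ N, (y+1) ∉ P := by
    intro y hyN hxP
    have hy1 : 1 ≤ y := hN1 y hyN
    have e1 : 2^(y+1) = 2^y*2 := pow_succ 2 y
    have e3 : (2:ℕ) ≤ 2^y := by
      have : 2^1 ≤ 2^y := Nat.pow_le_pow_right (by norm_num) hy1
      simpa using this
    refine no_improve hS hτ' hW' hW3' (le1 hxP) (le1 hyN)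
      (A' := (y ::ₘ {1} : Multiset ℕ)) (B' := 0)
      (by intro i hi; simp at hi; omega) (by simp) ?_
      (Or.inr ⟨by simp, Or.inl ?_⟩)
    · simp only [Multiset.map_cons, Multiset.map_singleton, Multiset.sum_cons,
        Multiset.sum_singleton, Multiset.map_zero, Multiset.sum_zero, nu]
      omega
    · simp only [Multiset.map_cons, Multiset.map_singleton, Multiset.sum_cons,
        Multiset.sum_singleton, Multiset.map_zero, Multiset.sum_zero]
      omega
  -- no y ∈ N with y-1 ∈ P
  have hgap2 : ∀ y ∈ N, 2 ≤ y → (y-1) ∉ P := by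
    intro y hyN hy2 hpP
    have e1 : 2^y = 2*2^(y-1) := by
      conv_lhs => rw [show y = y - 1 + 1 by omega, pow_succ]
      ring
    have e3 : (2:ℕ) ≤ 2^(y-1) := by
      have : 2^1 ≤ 2^(y-1) := Nat.pow_le_pow_right (by norm_num) (by omega)
      simpa using this
    refine no_improve hS hτ' hW' hW3' (le1 hpP) (le1 hyN)
      (A' := 0) (B' := ((y-1) ::ₘ {1} : Multiset ℕ))
      (by simp) (by intro i hi; simp at hi; omega) ?_
      (Or.inr ⟨by simp, Or.inl ?_⟩)
    · simp only [Multiset.map_cons, Multiset.map_singleton, Multiset.sum_cons,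
        Multiset.sum_singleton, Multiset.map_zero, Multiset.sum_zero, nu]
      omega
    · simp only [Multiset.map_cons, Multiset.map_singleton, Multiset.sum_cons,
        Multiset.sum_singleton, Multiset.map_zero, Multiset.sum_zero]
      omega
  -- greedy forms
  have hstructP : Struct P := ⟨hP1, hcountP, hccP⟩
  have hstructN : Struct N := ⟨hN1, hcountN, hccN⟩
  have hPg : P = greedy ((P.map nu).sum) := greedy_of_struct P hstructP
  have hNg : N = greedy ((N.map nu).sum) := greedy_of_struct N hstructN
  -- max element
  obtain ⟨m, hmP, hmax⟩ := exists_max hPne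
  have hm1 : 1 ≤ m := hP1 m hmP
  have hsle : (P.map nu).sum ≤ 2^(m+1) - 2 := sum_le_of_struct m P hstructP hmax
  have hnum : nu m ≤ (P.map nu).sum := Multiset.le_sum_of_mem (Multiset.mem_map_of_mem nu hmP)
  have em : 2^m = 2*2^(m-1) := by
    conv_lhs => rw [show m = m - 1 + 1 by omega, pow_succ]
    ring
  have em1 : 2^(m+1) = 2^m*2 := pow_succ 2 m
  have em2 : (1:ℕ) ≤ 2^(m-1) := Nat.one_le_two_pow
  have hnum2 : 2^m - 1 ≤ (P.map nu).sum := hnum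
  have hbounds : 2^(m-1) ≤ n ∧ n < 2^(m+1) := by
    rcases eq_or_ne N 0 with hN0 | hN0
    · rw [hN0] at hs_eq
      simp at hs_eq
      constructor <;> omega
    · obtain ⟨m', hm'N, hmax'⟩ := exists_max hN0
      have hm'1 : 1 ≤ m' := hN1 m' hm'N
      have hm'2 : 2 ≤ m' := by
        rcases eq_or_lt_of_le hm'1 with h | h
        · exact absurd (h ▸ hm'N) h1N
        · omega
      have htle : (N.map nu).sum ≤ 2^(m'+1) - 2 := sum_le_of_struct m' N hstructN hmax'
      have hnum' : nu m' ≤ (N.map nu).sum :=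
        Multiset.le_sum_of_mem (Multiset.mem_map_of_mem nu hm'N)
      have hnum2' : 2^m' - 1 ≤ (N.map nu).sum := hnum'
      -- m' ∉ {m-1, m, m+1}
      have hne1 : m' ≠ m := fun h => hdisj m hmP (h ▸ hm'N)
      have hne2 : m' + 1 ≠ m := fun h => hgap1 m' hm'N (h ▸ hmP)
      have hne3 : m' ≠ m + 1 := fun h => hgap2 m' hm'N hm'2 (by rw [h]; simpa using hmP)
      -- m' ≤ m+1 : else contradiction
      have hm'le : m' ≤ m + 1 := by
        by_contra hgt
        push_neg at hgt
        have : 2^(m+2) ≤ 2^m' := Nat.pow_le_pow_right (by norm_num) (by omega)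
        have e : 2^(m+2) = 2^m*4 := by
          rw [show m + 2 = m + 1 + 1 from rfl, pow_succ, pow_succ]
          ring
        omega
      have hm'le2 : m' ≤ m - 2 := by omega
      have : 2^(m'+1) ≤ 2^(m-1) := Nat.pow_le_pow_right (by norm_num) (by omega)
      constructor <;> omega
  have hn0 : n ≠ 0 := by omega
  have hl1 : m - 1 ≤ Nat.log 2 n := (Nat.le_log_iff_pow_le one_lt_two hn0).mpr hbounds.1
  have hl2 : Nat.log 2 n < m + 1 := (Nat.log_lt_iff_lt_pow one_lt_two hn0).mpr hbounds.2
  exact ⟨P, N, hS, hcard, hdisj, hPg, hNg, m, hmP, hmax, by omega⟩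
end
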